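/- Let α, β ∈ ℕ³ and let p ∈ ℝ with 1 ≤ p < ∞. Then ∫_{int T} |R^α_β(x,y)|^p d(x,y) < ∞ if and only if p · ((α₀+α₁+α₂) − max_j(α_j+β_j)) > −2, where the difference (α₀+α₁+α₂) − max_j(α_j+β_j) is computed in ℤ. In particular R^α_β is Lebesgue integrable on T if and only if max_j(α_j+β_j) ≤ α₀+α₁+α₂+1. -/

import Mathlib

open MeasureTheory

open Set Real
open scoped ENNReal

noncomputable def M2 (a b c d : ℝ) : ℝ × ℝ →L[ℝ] ℝ × ℝ :=
  LinearMap.toContinuousLinearMap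
    (Matrix.toLin (Module.Basis.finTwoProd ℝ) (Module.Basis.finTwoProd ℝ) !![a, b; c, d])

lemma M2_det (a b c d : ℝ) : (M2 a b c d).det = a * d - b * c := by
  simp only [M2, ContinuousLinearMap.det, LinearMap.coe_toContinuousLinearMap,
    LinearMap.det_toLin, Matrix.det_fin_two_of]

def Tri : Set (ℝ × ℝ) := {q : ℝ × ℝ | 0 < q.1 ∧ 0 < q.2 ∧ q.1 + q.2 < 1}

lemma Tri_measurable : MeasurableSet Tri := by
  apply MeasurableSet.inter
  · exact measurableSet_lt measurable_const measurable_fst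
  apply MeasurableSet.inter
  · exact measurableSet_lt measurable_const measurable_snd
  · exact measurableSet_lt (measurable_fst.add measurable_snd) measurable_const

noncomputable def Phi : ℝ × ℝ → ℝ × ℝ := fun q => (q.1 * q.2, q.1 - q.1 * q.2)

lemma hasFDerivAt_Phi (q : ℝ × ℝ) :
    HasFDerivAt Phi (M2 q.2 q.1 (1 - q.2) (-q.1)) q := by
  rw [M2, Matrix.toLin_finTwoProd_toContinuousLinearMap]
  convert HasFDerivAt.prodMk (𝕜 := ℝ)
    (hasFDerivAt_fst.mul hasFDerivAt_snd : HasFDerivAt (fun r : ℝ × ℝ => r.1 * r.2) _ q)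
    (hasFDerivAt_fst.sub (hasFDerivAt_fst.mul hasFDerivAt_snd :
      HasFDerivAt (fun r : ℝ × ℝ => r.1 * r.2) _ q)) using 2 <;>
  · ext v <;> simp [sub_smul, Phi]

lemma Phi_image : Phi '' (Ioo (0:ℝ) 1 ×ˢ Ioo (0:ℝ) 1) = Tri := by
  ext ⟨x, y⟩
  constructor
  · rintro ⟨⟨s, t⟩, ⟨⟨hs0, hs1⟩, ht0, ht1⟩, h⟩
    simp only [Phi, Prod.mk.injEq] at h
    obtain ⟨hx, hy⟩ := h
    refine ⟨?_, ?_, ?_⟩ <;> simp only [Tri, Set.mem_setOf_eq] <;> subst hx; subst hy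
    · positivity
    · nlinarith
    · nlinarith
  · rintro ⟨hx, hy, hxy⟩
    refine ⟨(x + y, x / (x + y)), ⟨⟨by positivity, hxy⟩, by positivity, ?_⟩, ?_⟩
    · rw [div_lt_one (by positivity)]; linarith
    · simp only [Phi, Prod.mk.injEq]
      have hxy0 : x + y ≠ 0 := by positivity
      constructor
      · field_simp
      · field_simp; ring

lemma Phi_injOn : Set.InjOn Phi (Ioo (0:ℝ) 1 ×ˢ Ioo (0:ℝ) 1) := by
  rintro ⟨s, t⟩ ⟨⟨hs0, _⟩, _, _⟩ ⟨s', t'⟩ ⟨⟨hs0', _⟩, _, _⟩ h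
  simp only [Phi, Prod.mk.injEq] at h ⊢
  obtain ⟨h1, h2⟩ := h
  have hs : s = s' := by nlinarith
  subst hs
  exact ⟨rfl, by nlinarith⟩

lemma lintegral_rpow_Ioo (e : ℝ) :
    (∫⁻ x in Ioo (0:ℝ) 1, ENNReal.ofReal (x ^ e)) ≠ ∞ ↔ -1 < e := by
  rw [lintegral_ofReal_ne_top_iff_integrable
      (measurable_id'.pow_const e).aestronglyMeasurable
      (((ae_restrict_iff' measurableSet_Ioo).2 (Filter.Eventually.of_forall
        fun x hx => Real.rpow_nonneg hx.1.le e)))]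
  exact intervalIntegral.integrableOn_Ioo_rpow_iff zero_lt_one

lemma corner_lintegral (a b c : ℝ) (ha : 0 ≤ a) (hb : 0 ≤ b) :
    (∫⁻ q in Tri, ENNReal.ofReal (q.1 ^ a * q.2 ^ b * (q.1 + q.2) ^ c)) ≠ ∞ ↔ -2 < a + b + c := by
  have hsq : MeasurableSet (Ioo (0:ℝ) 1 ×ˢ Ioo (0:ℝ) 1) :=
    measurableSet_Ioo.prod measurableSet_Ioo
  have key := lintegral_image_eq_lintegral_abs_det_fderiv_mul volume hsq
      (fun q _ => (hasFDerivAt_Phi q).hasFDerivWithinAt) Phi_injOn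
      (fun q : ℝ × ℝ => ENNReal.ofReal (q.1 ^ a * q.2 ^ b * (q.1 + q.2) ^ c))
  rw [Phi_image] at key
  have congr1 : (∫⁻ x in Ioo (0:ℝ) 1 ×ˢ Ioo (0:ℝ) 1,
      ENNReal.ofReal |(M2 x.2 x.1 (1 - x.2) (-x.1)).det| *
        ENNReal.ofReal ((Phi x).1 ^ a * (Phi x).2 ^ b * ((Phi x).1 + (Phi x).2) ^ c))
      = ∫⁻ x in Ioo (0:ℝ) 1 ×ˢ Ioo (0:ℝ) 1,
        ENNReal.ofReal (x.1 ^ (a + b + c + 1)) * ENNReal.ofReal (x.2 ^ a * (1 - x.2) ^ b) := by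
    refine setLIntegral_congr_fun hsq ?_
    rintro ⟨s, t⟩ ⟨⟨hs0, hs1⟩, ht0, ht1⟩
    have h1t : (0:ℝ) < 1 - t := by linarith
    simp only [Phi, M2_det]
    have hdet : t * -s - s * (1 - t) = -s := by ring
    rw [hdet, abs_neg, abs_of_pos hs0, ← ENNReal.ofReal_mul hs0.le,
      ← ENNReal.ofReal_mul (Real.rpow_nonneg hs0.le _)]
    congr 1
    have hst : s - s * t = s * (1 - t) := by ring
    have hsum : s * t + s * (1 - t) = s := by ring
    rw [hst, hsum, Real.mul_rpow hs0.le ht0.le, Real.mul_rpow hs0.le h1t.le,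
      show a + b + c + 1 = a + (b + (c + 1)) by ring,
      Real.rpow_add hs0, Real.rpow_add hs0, Real.rpow_add hs0, Real.rpow_one]
    ring
  have prodstep : (∫⁻ x in Ioo (0:ℝ) 1 ×ˢ Ioo (0:ℝ) 1,
        ENNReal.ofReal (x.1 ^ (a + b + c + 1)) * ENNReal.ofReal (x.2 ^ a * (1 - x.2) ^ b))
      = (∫⁻ x in Ioo (0:ℝ) 1, ENNReal.ofReal (x ^ (a + b + c + 1))) *
        ∫⁻ x in Ioo (0:ℝ) 1, ENNReal.ofReal (x ^ a * (1 - x) ^ b) := by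
    rw [Measure.volume_eq_prod, ← Measure.prod_restrict]
    exact lintegral_prod_mul ((measurable_id'.pow_const _).ennreal_ofReal.aemeasurable)
      (((measurable_id'.pow_const a).mul
        ((measurable_const.sub measurable_id').pow_const b)).ennreal_ofReal.aemeasurable)
  rw [key, congr1, prodstep]
  have hF2top : (∫⁻ x in Ioo (0:ℝ) 1, ENNReal.ofReal (x ^ a * (1 - x) ^ b)) ≤ 1 := by
    calc (∫⁻ x in Ioo (0:ℝ) 1, ENNReal.ofReal (x ^ a * (1 - x) ^ b))
        ≤ ∫⁻ _x in Ioo (0:ℝ) 1, 1 := by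
          refine setLIntegral_mono measurable_const fun x hx => ?_
          refine ENNReal.ofReal_le_one.2 ?_
          have h1 : x ^ a ≤ 1 := Real.rpow_le_one hx.1.le hx.2.le ha
          have h2 : (1 - x) ^ b ≤ 1 :=
            Real.rpow_le_one (by linarith [hx.2]) (by linarith [hx.1]) hb
          nlinarith [Real.rpow_nonneg hx.1.le a,
            Real.rpow_nonneg (show (0:ℝ) ≤ 1 - x by linarith [hx.2]) b]
      _ = 1 := by simp [Real.volume_Ioo]
  have hF2pos : (∫⁻ x in Ioo (0:ℝ) 1, ENNReal.ofReal (x ^ a * (1 - x) ^ b)) ≠ 0 := by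
    have hsub : Ioo (1/4 : ℝ) (1/2) ⊆ Ioo (0:ℝ) 1 :=
      fun x hx => ⟨by linarith [hx.1], by linarith [hx.2]⟩
    have hlow : (∫⁻ _x in Ioo (1/4:ℝ) (1/2), ENNReal.ofReal ((1/4 : ℝ) ^ a * (1/2 : ℝ) ^ b))
        ≤ ∫⁻ x in Ioo (0:ℝ) 1, ENNReal.ofReal (x ^ a * (1 - x) ^ b) := by
      calc (∫⁻ _x in Ioo (1/4:ℝ) (1/2), ENNReal.ofReal ((1/4 : ℝ) ^ a * (1/2 : ℝ) ^ b))
          ≤ ∫⁻ x in Ioo (1/4:ℝ) (1/2), ENNReal.ofReal (x ^ a * (1 - x) ^ b) := by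
            refine setLIntegral_mono
              (((measurable_id'.pow_const a).mul
                ((measurable_const.sub measurable_id').pow_const b)).ennreal_ofReal)
              fun x hx => ?_
            refine ENNReal.ofReal_le_ofReal ?_
            have h1 : (1/4 : ℝ) ^ a ≤ x ^ a :=
              Real.rpow_le_rpow (by norm_num) hx.1.le ha
            have h2 : (1/2 : ℝ) ^ b ≤ (1 - x) ^ b :=
              Real.rpow_le_rpow (by norm_num) (by linarith [hx.2]) hb
            exact mul_le_mul h1 h2 (Real.rpow_nonneg (by norm_num) b)
              (Real.rpow_nonneg (by linarith [hx.1]) a)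
        _ ≤ _ := lintegral_mono' (Measure.restrict_mono hsub le_rfl) le_rfl
    intro h0
    rw [h0] at hlow
    simp only [nonpos_iff_eq_zero, lintegral_const, Measure.restrict_apply MeasurableSet.univ,
      univ_inter, Real.volume_Ioo, mul_eq_zero, ENNReal.ofReal_eq_zero] at hlow
    rcases hlow with h | h
    · have : (0:ℝ) < (1/4 : ℝ) ^ a * (1/2 : ℝ) ^ b := by positivity
      linarith
    · norm_num at h
  have hiff := lintegral_rpow_Ioo (a + b + c + 1)
  constructor
  · intro h
    have hF1 : (∫⁻ x in Ioo (0:ℝ) 1, ENNReal.ofReal (x ^ (a + b + c + 1))) ≠ ∞ := by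
      intro htop
      rw [htop, ENNReal.top_mul hF2pos] at h
      exact h rfl
    linarith [hiff.1 hF1]
  · intro h
    exact ENNReal.mul_ne_top (hiff.2 (by linarith)) (hF2top.trans_lt ENNReal.one_lt_top).ne

noncomputable def Sig1 : ℝ × ℝ → ℝ × ℝ := fun q => (1 - q.1 - q.2, q.2)
noncomputable def Sig2 : ℝ × ℝ → ℝ × ℝ := fun q => (q.1, 1 - q.1 - q.2)

lemma hasFDerivAt_Sig1 (q : ℝ × ℝ) : HasFDerivAt Sig1 (M2 (-1) (-1) 0 1) q := by
  rw [M2, Matrix.toLin_finTwoProd_toContinuousLinearMap]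
  convert HasFDerivAt.prodMk (𝕜 := ℝ)
    (((hasFDerivAt_const (1:ℝ) q).sub hasFDerivAt_fst).sub hasFDerivAt_snd)
    hasFDerivAt_snd using 2 <;>
  · ext v <;> simp [Sig1]

lemma hasFDerivAt_Sig2 (q : ℝ × ℝ) : HasFDerivAt Sig2 (M2 1 0 (-1) (-1)) q := by
  rw [M2, Matrix.toLin_finTwoProd_toContinuousLinearMap]
  convert HasFDerivAt.prodMk (𝕜 := ℝ) hasFDerivAt_fst
    (((hasFDerivAt_const (1:ℝ) q).sub hasFDerivAt_fst).sub hasFDerivAt_snd) using 2 <;>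
  · ext v <;> simp [Sig2]

lemma Sig1_maps : ∀ q ∈ Tri, Sig1 q ∈ Tri := by
  rintro ⟨x, y⟩ ⟨hx, hy, hxy⟩
  exact ⟨by simp [Sig1]; linarith, by simpa [Sig1] using hy, by simp [Sig1]; linarith⟩

lemma Sig2_maps : ∀ q ∈ Tri, Sig2 q ∈ Tri := by
  rintro ⟨x, y⟩ ⟨hx, hy, hxy⟩
  exact ⟨by simpa [Sig2] using hx, by simp [Sig2]; linarith, by simp [Sig2]; linarith⟩

lemma Sig1_invol (q : ℝ × ℝ) : Sig1 (Sig1 q) = q := by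
  obtain ⟨x, y⟩ := q
  simp only [Sig1, Prod.mk.injEq]
  exact ⟨by ring, trivial⟩

lemma Sig2_invol (q : ℝ × ℝ) : Sig2 (Sig2 q) = q := by
  obtain ⟨x, y⟩ := q
  simp only [Sig2, Prod.mk.injEq]
  exact ⟨trivial, by ring⟩

lemma Sig1_image : Sig1 '' Tri = Tri := by
  apply Set.Subset.antisymm
  · rintro _ ⟨q, hq, rfl⟩; exact Sig1_maps q hq
  · intro q hq
    exact ⟨Sig1 q, Sig1_maps q hq, Sig1_invol q⟩

lemma Sig2_image : Sig2 '' Tri = Tri := by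
  apply Set.Subset.antisymm
  · rintro _ ⟨q, hq, rfl⟩; exact Sig2_maps q hq
  · intro q hq
    exact ⟨Sig2 q, Sig2_maps q hq, Sig2_invol q⟩

lemma Sig1_lintegral (g : ℝ × ℝ → ℝ≥0∞) :
    (∫⁻ q in Tri, g (Sig1 q)) = ∫⁻ q in Tri, g q := by
  have inj : Set.InjOn Sig1 Tri := fun q _ q' _ h => by
    rw [← Sig1_invol q, h, Sig1_invol]
  have key := lintegral_image_eq_lintegral_abs_det_fderiv_mul volume Tri_measurable
      (fun q _ => (hasFDerivAt_Sig1 q).hasFDerivWithinAt) inj g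
  rw [Sig1_image] at key
  rw [key]
  refine setLIntegral_congr_fun Tri_measurable (fun q _ => ?_)
  rw [M2_det]
  norm_num

lemma Sig2_lintegral (g : ℝ × ℝ → ℝ≥0∞) :
    (∫⁻ q in Tri, g (Sig2 q)) = ∫⁻ q in Tri, g q := by
  have inj : Set.InjOn Sig2 Tri := fun q _ q' _ h => by
    rw [← Sig2_invol q, h, Sig2_invol]
  have key := lintegral_image_eq_lintegral_abs_det_fderiv_mul volume Tri_measurable
      (fun q _ => (hasFDerivAt_Sig2 q).hasFDerivWithinAt) inj g
  rw [Sig2_image] at key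
  rw [key]
  refine setLIntegral_congr_fun Tri_measurable (fun q _ => ?_)
  rw [M2_det]
  norm_num

lemma corner1_lintegral (a b c : ℝ) (ha : 0 ≤ a) (hb : 0 ≤ b) :
    (∫⁻ q in Tri, ENNReal.ofReal ((1 - q.1 - q.2) ^ a * q.2 ^ b * (1 - q.1) ^ c)) ≠ ∞ ↔
      -2 < a + b + c := by
  rw [show (∫⁻ q in Tri, ENNReal.ofReal ((1 - q.1 - q.2) ^ a * q.2 ^ b * (1 - q.1) ^ c))
      = ∫⁻ q in Tri,
        (fun r : ℝ × ℝ => ENNReal.ofReal (r.1 ^ a * r.2 ^ b * (r.1 + r.2) ^ c)) (Sig1 q) from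
    setLIntegral_congr_fun Tri_measurable (fun q _ => by
      simp only [Sig1]
      rw [show 1 - q.1 - q.2 + q.2 = 1 - q.1 by ring]),
    Sig1_lintegral (fun r : ℝ × ℝ => ENNReal.ofReal (r.1 ^ a * r.2 ^ b * (r.1 + r.2) ^ c))]
  exact corner_lintegral a b c ha hb

lemma corner2_lintegral (a b c : ℝ) (ha : 0 ≤ a) (hb : 0 ≤ b) :
    (∫⁻ q in Tri, ENNReal.ofReal ((1 - q.1 - q.2) ^ a * q.1 ^ b * (1 - q.2) ^ c)) ≠ ∞ ↔
      -2 < a + b + c := by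
  rw [show (∫⁻ q in Tri, ENNReal.ofReal ((1 - q.1 - q.2) ^ a * q.1 ^ b * (1 - q.2) ^ c))
      = ∫⁻ q in Tri,
        (fun r : ℝ × ℝ => ENNReal.ofReal (r.1 ^ b * r.2 ^ a * (r.1 + r.2) ^ c)) (Sig2 q) from
    setLIntegral_congr_fun Tri_measurable (fun q _ => by
      simp only [Sig2]
      rw [show q.1 + (1 - q.1 - q.2) = 1 - q.2 by ring, show (1 - q.1 - q.2) ^ a * q.1 ^ b
        = q.1 ^ b * (1 - q.1 - q.2) ^ a by ring]),
    Sig2_lintegral (fun r : ℝ × ℝ => ENNReal.ofReal (r.1 ^ b * r.2 ^ a * (r.1 + r.2) ^ c))]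
  rw [corner_lintegral b a c hb ha]
  constructor <;> intro <;> linarith

lemma mul3_le {a b c a' b' c' : ℝ} (ha : 0 ≤ a) (hb : 0 ≤ b) (hc : 0 ≤ c)
    (h1 : a ≤ a') (h2 : b ≤ b') (h3 : c ≤ c') : a * b * c ≤ a' * b' * c' := by
  have hab : a * b ≤ a' * b' := mul_le_mul h1 h2 hb (ha.trans h1)
  exact mul_le_mul hab h3 hc (mul_nonneg (ha.trans h1) (hb.trans h2))

lemma w_bound {u v w A C C' : ℝ} (hu : 1/3 ≤ u) (hu1 : u ≤ 1) (hv : 1/3 ≤ v) (hv1 : v ≤ 1)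
    (hw : 1/3 ≤ w) (hw1 : w ≤ 1) (hA : 0 ≤ A) (hC : C ≤ 0) (hC' : C' ≤ 0) :
    (1/3 : ℝ) ^ A ≤ u ^ A * v ^ C * w ^ C' ∧
      u ^ A * v ^ C * w ^ C' ≤ (1/3 : ℝ) ^ C * (1/3 : ℝ) ^ C' := by
  have h1 : (1/3 : ℝ) ^ A ≤ u ^ A := Real.rpow_le_rpow (by norm_num) hu hA
  have h1' : u ^ A ≤ 1 := Real.rpow_le_one (by linarith) hu1 hA
  have h2 : (1 : ℝ) ≤ v ^ C :=
    Real.one_le_rpow_of_pos_of_le_one_of_nonpos (by linarith) hv1 hC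
  have h2' : v ^ C ≤ (1/3 : ℝ) ^ C := Real.rpow_le_rpow_of_nonpos (by norm_num) hv hC
  have h3 : (1 : ℝ) ≤ w ^ C' :=
    Real.one_le_rpow_of_pos_of_le_one_of_nonpos (by linarith) hw1 hC'
  have h3' : w ^ C' ≤ (1/3 : ℝ) ^ C' := Real.rpow_le_rpow_of_nonpos (by norm_num) hw hC'
  constructor
  · calc (1/3 : ℝ) ^ A = (1/3 : ℝ) ^ A * 1 * 1 := by ring
      _ ≤ u ^ A * v ^ C * w ^ C' :=
        mul3_le (by positivity) zero_le_one zero_le_one h1 h2 h3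
  · calc u ^ A * v ^ C * w ^ C' ≤ 1 * ((1/3 : ℝ) ^ C) * ((1/3 : ℝ) ^ C') :=
        mul3_le (Real.rpow_nonneg (by linarith) A) (Real.rpow_nonneg (by linarith) C)
          (Real.rpow_nonneg (by linarith) C') h1' h2' h3'
      _ = (1/3 : ℝ) ^ C * (1/3 : ℝ) ^ C' := by ring

lemma sandwich_pt {lo hi w hreal : ℝ} (hw0 : 0 ≤ w) (hlo : lo ≤ w) (hhi : w ≤ hi) :
    ENNReal.ofReal lo * ENNReal.ofReal hreal ≤ ENNReal.ofReal (w * hreal) ∧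
      ENNReal.ofReal (w * hreal) ≤ ENNReal.ofReal hi * ENNReal.ofReal hreal := by
  rw [ENNReal.ofReal_mul hw0]
  exact ⟨mul_le_mul_left (ENNReal.ofReal_le_ofReal hlo) _,
    mul_le_mul_left (ENNReal.ofReal_le_ofReal hhi) _⟩

lemma Tri_subset_sq : Tri ⊆ Ioo (0:ℝ) 1 ×ˢ Ioo (0:ℝ) 1 := by
  rintro ⟨x, y⟩ ⟨hx, hy, hxy⟩
  exact ⟨⟨hx, by linarith⟩, ⟨hy, by linarith⟩⟩

lemma lint_sandwich_a {S : Set (ℝ × ℝ)} {G h : ℝ × ℝ → ℝ≥0∞}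
    (hmh : Measurable h) {hi : ℝ}
    (hup : ∀ q ∈ S, G q ≤ ENNReal.ofReal hi * h q) (hS : S ⊆ Tri)
    (hfin : (∫⁻ q in Tri, h q) ≠ ∞) : (∫⁻ q in S, G q) ≠ ∞ := by
  have h1 : (∫⁻ q in S, G q) ≤ ENNReal.ofReal hi * ∫⁻ q in S, h q := by
    calc (∫⁻ q in S, G q) ≤ ∫⁻ q in S, ENNReal.ofReal hi * h q :=
          setLIntegral_mono (hmh.const_mul _) hup
      _ = ENNReal.ofReal hi * ∫⁻ q in S, h q := lintegral_const_mul _ hmh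
  have h2 : (∫⁻ q in S, h q) ≤ ∫⁻ q in Tri, h q :=
    lintegral_mono' (Measure.restrict_mono hS le_rfl) le_rfl
  exact ((h1.trans (mul_le_mul_right h2 _)).trans_lt
    (ENNReal.mul_lt_top ENNReal.ofReal_lt_top (lt_top_iff_ne_top.2 hfin))).ne

lemma lint_sandwich_b {S : Set (ℝ × ℝ)} {G h : ℝ × ℝ → ℝ≥0∞}
    (hmG : Measurable G) {lo : ℝ} (hlo : 0 < lo)
    (hlow : ∀ q ∈ S, ENNReal.ofReal lo * h q ≤ G q) (hS : S ⊆ Tri)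
    (hfin : (∫⁻ q in Tri, G q) ≠ ∞) : (∫⁻ q in S, h q) ≠ ∞ := by
  intro htop
  have h1 : ENNReal.ofReal lo * ∫⁻ q in S, h q ≤ ∫⁻ q in S, G q := by
    rw [← lintegral_const_mul' _ _ ENNReal.ofReal_ne_top]
    exact setLIntegral_mono hmG hlow
  rw [htop, ENNReal.mul_top (ENNReal.ofReal_pos.2 hlo).ne'] at h1
  have h2 : (∫⁻ q in S, G q) ≤ ∫⁻ q in Tri, G q :=
    lintegral_mono' (Measure.restrict_mono hS le_rfl) le_rfl
  exact hfin (top_le_iff.1 (h1.trans h2))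

lemma lint_bounded {S : Set (ℝ × ℝ)} (hS : S ⊆ Tri) {h : ℝ × ℝ → ℝ≥0∞} {K : ℝ}
    (hK : ∀ q ∈ S, h q ≤ ENNReal.ofReal K) : (∫⁻ q in S, h q) ≠ ∞ := by
  have h1 : (∫⁻ q in S, h q) ≤ ∫⁻ _q in S, ENNReal.ofReal K :=
    setLIntegral_mono measurable_const hK
  refine (h1.trans_lt ?_).ne
  rw [setLIntegral_const]
  refine ENNReal.mul_lt_top ENNReal.ofReal_lt_top ?_
  refine lt_of_le_of_lt (measure_mono (hS.trans Tri_subset_sq)) ?_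
  rw [Measure.volume_eq_prod, Measure.prod_prod, Real.volume_Ioo]
  simp

lemma main_lintegral (A0 A1 A2 C0 C1 C2 : ℝ)
    (hA0 : 0 ≤ A0) (hA1 : 0 ≤ A1) (hA2 : 0 ≤ A2)
    (hC0 : C0 ≤ 0) (hC1 : C1 ≤ 0) (hC2 : C2 ≤ 0) :
    (∫⁻ q in Tri, ENNReal.ofReal ((1 - q.1 - q.2) ^ A0 * q.1 ^ A1 * q.2 ^ A2 *
        (q.1 + q.2) ^ C0 * (1 - q.1) ^ C1 * (1 - q.2) ^ C2)) ≠ ∞ ↔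
      (-2 < A1 + A2 + C0 ∧ -2 < A0 + A2 + C1 ∧ -2 < A0 + A1 + C2) := by
  have m0 : Measurable fun q : ℝ × ℝ => 1 - q.1 - q.2 :=
    (measurable_const.sub measurable_fst).sub measurable_snd
  have msum : Measurable fun q : ℝ × ℝ => q.1 + q.2 := measurable_fst.add measurable_snd
  have mcx : Measurable fun q : ℝ × ℝ => 1 - q.1 := measurable_const.sub measurable_fst
  have mcy : Measurable fun q : ℝ × ℝ => 1 - q.2 := measurable_const.sub measurable_snd
  set G : ℝ × ℝ → ℝ≥0∞ := fun q => ENNReal.ofReal ((1 - q.1 - q.2) ^ A0 * q.1 ^ A1 *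
    q.2 ^ A2 * (q.1 + q.2) ^ C0 * (1 - q.1) ^ C1 * (1 - q.2) ^ C2) with hGdef
  set h0 : ℝ × ℝ → ℝ≥0∞ :=
    fun q => ENNReal.ofReal (q.1 ^ A1 * q.2 ^ A2 * (q.1 + q.2) ^ C0) with h0def
  set h1 : ℝ × ℝ → ℝ≥0∞ :=
    fun q => ENNReal.ofReal ((1 - q.1 - q.2) ^ A0 * q.2 ^ A2 * (1 - q.1) ^ C1) with h1def
  set h2 : ℝ × ℝ → ℝ≥0∞ :=
    fun q => ENNReal.ofReal ((1 - q.1 - q.2) ^ A0 * q.1 ^ A1 * (1 - q.2) ^ C2) with h2def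
  have Gmeas : Measurable G :=
    ((((((m0.pow_const A0).mul (measurable_fst.pow_const A1)).mul
      (measurable_snd.pow_const A2)).mul (msum.pow_const C0)).mul
      (mcx.pow_const C1)).mul (mcy.pow_const C2)).ennreal_ofReal
  have h0meas : Measurable h0 :=
    (((measurable_fst.pow_const A1).mul (measurable_snd.pow_const A2)).mul
      (msum.pow_const C0)).ennreal_ofReal
  have h1meas : Measurable h1 :=
    (((m0.pow_const A0).mul (measurable_snd.pow_const A2)).mul
      (mcx.pow_const C1)).ennreal_ofReal
  have h2meas : Measurable h2 :=
    (((m0.pow_const A0).mul (measurable_fst.pow_const A1)).mul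
      (mcy.pow_const C2)).ennreal_ofReal
  set S0 : Set (ℝ × ℝ) := Tri ∩ {q : ℝ × ℝ | 1/3 ≤ 1 - q.1 - q.2} with hS0def
  set S1 : Set (ℝ × ℝ) := Tri ∩ {q : ℝ × ℝ | 1/3 ≤ q.1} with hS1def
  set S2 : Set (ℝ × ℝ) := Tri ∩ {q : ℝ × ℝ | 1/3 ≤ q.2} with hS2def
  -- sandwich bounds on each region
  have sw0 : ∀ q ∈ S0, ENNReal.ofReal ((1/3 : ℝ) ^ A0) * h0 q ≤ G q ∧
      G q ≤ ENNReal.ofReal ((1/3 : ℝ) ^ C1 * (1/3 : ℝ) ^ C2) * h0 q := by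
    rintro ⟨x, y⟩ ⟨⟨hx, hy, hxy⟩, hm⟩
    simp only [mem_setOf_eq] at hm
    have hbw := w_bound (u := 1 - x - y) (v := 1 - x) (w := 1 - y) hm (by linarith)
      (by linarith) (by linarith) (by linarith) (by linarith) hA0 hC1 hC2
    have hG : G (x, y) = ENNReal.ofReal (((1 - x - y) ^ A0 * (1 - x) ^ C1 * (1 - y) ^ C2) *
        (x ^ A1 * y ^ A2 * (x + y) ^ C0)) := by
      simp only [hGdef]; congr 1; ring
    rw [hG]
    exact sandwich_pt (mul_nonneg (mul_nonneg (Real.rpow_nonneg (by linarith) _)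
      (Real.rpow_nonneg (by linarith) _)) (Real.rpow_nonneg (by linarith) _)) hbw.1 hbw.2
  have sw1 : ∀ q ∈ S1, ENNReal.ofReal ((1/3 : ℝ) ^ A1) * h1 q ≤ G q ∧
      G q ≤ ENNReal.ofReal ((1/3 : ℝ) ^ C0 * (1/3 : ℝ) ^ C2) * h1 q := by
    rintro ⟨x, y⟩ ⟨⟨hx, hy, hxy⟩, hm⟩
    simp only [mem_setOf_eq] at hm
    have hbw := w_bound (u := x) (v := x + y) (w := 1 - y) hm (by linarith)
      (by linarith) (by linarith) (by linarith) (by linarith) hA1 hC0 hC2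
    have hG : G (x, y) = ENNReal.ofReal ((x ^ A1 * (x + y) ^ C0 * (1 - y) ^ C2) *
        ((1 - x - y) ^ A0 * y ^ A2 * (1 - x) ^ C1)) := by
      simp only [hGdef]; congr 1; ring
    rw [hG]
    exact sandwich_pt (mul_nonneg (mul_nonneg (Real.rpow_nonneg (by linarith) _)
      (Real.rpow_nonneg (by linarith) _)) (Real.rpow_nonneg (by linarith) _)) hbw.1 hbw.2
  have sw2 : ∀ q ∈ S2, ENNReal.ofReal ((1/3 : ℝ) ^ A2) * h2 q ≤ G q ∧
      G q ≤ ENNReal.ofReal ((1/3 : ℝ) ^ C0 * (1/3 : ℝ) ^ C1) * h2 q := by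
    rintro ⟨x, y⟩ ⟨⟨hx, hy, hxy⟩, hm⟩
    simp only [mem_setOf_eq] at hm
    have hbw := w_bound (u := y) (v := x + y) (w := 1 - x) hm (by linarith)
      (by linarith) (by linarith) (by linarith) (by linarith) hA2 hC0 hC1
    have hG : G (x, y) = ENNReal.ofReal ((y ^ A2 * (x + y) ^ C0 * (1 - x) ^ C1) *
        ((1 - x - y) ^ A0 * x ^ A1 * (1 - y) ^ C2)) := by
      simp only [hGdef]; congr 1; ring
    rw [hG]
    exact sandwich_pt (mul_nonneg (mul_nonneg (Real.rpow_nonneg (by linarith) _)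
      (Real.rpow_nonneg (by linarith) _)) (Real.rpow_nonneg (by linarith) _)) hbw.1 hbw.2
  constructor
  · intro hfin
    refine ⟨?_, ?_, ?_⟩
    · refine (corner_lintegral A1 A2 C0 hA1 hA2).1 ?_
      have hbS : (∫⁻ q in S0, h0 q) ≠ ∞ :=
        lint_sandwich_b Gmeas (by positivity) (fun q hq => (sw0 q hq).1)
          inter_subset_left hfin
      have hbC : (∫⁻ q in Tri \ S0, h0 q) ≠ ∞ := by
        refine lint_bounded diff_subset (K := (2/3 : ℝ) ^ C0) ?_
        rintro ⟨x, y⟩ ⟨⟨hx, hy, hxy⟩, hns⟩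
        have hlt : ¬ (1/3 ≤ 1 - x - y) := fun h => hns ⟨⟨hx, hy, hxy⟩, h⟩
        push_neg at hlt
        refine ENNReal.ofReal_le_ofReal ?_
        calc x ^ A1 * y ^ A2 * (x + y) ^ C0 ≤ 1 * 1 * (2/3 : ℝ) ^ C0 :=
            mul3_le (Real.rpow_nonneg hx.le A1) (Real.rpow_nonneg hy.le A2)
              (Real.rpow_nonneg (by linarith) C0)
              (Real.rpow_le_one hx.le (by linarith) hA1)
              (Real.rpow_le_one hy.le (by linarith) hA2)
              (Real.rpow_le_rpow_of_nonpos (by norm_num) (by linarith) hC0)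
          _ = (2/3 : ℝ) ^ C0 := by ring
      have hcov : Tri ⊆ S0 ∪ (Tri \ S0) := fun q hq => by
        by_cases h : q ∈ S0
        exacts [Or.inl h, Or.inr ⟨hq, h⟩]
      refine ((lintegral_mono' (Measure.restrict_mono hcov le_rfl) le_rfl).trans
        (lintegral_union_le _ _ _)).trans_lt ?_ |>.ne
      exact ENNReal.add_lt_top.2 ⟨lt_top_iff_ne_top.2 hbS, lt_top_iff_ne_top.2 hbC⟩
    · refine (corner1_lintegral A0 A2 C1 hA0 hA2).1 ?_
      have hbS : (∫⁻ q in S1, h1 q) ≠ ∞ :=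
        lint_sandwich_b Gmeas (by positivity) (fun q hq => (sw1 q hq).1)
          inter_subset_left hfin
      have hbC : (∫⁻ q in Tri \ S1, h1 q) ≠ ∞ := by
        refine lint_bounded diff_subset (K := (2/3 : ℝ) ^ C1) ?_
        rintro ⟨x, y⟩ ⟨⟨hx, hy, hxy⟩, hns⟩
        have hlt : ¬ (1/3 ≤ x) := fun h => hns ⟨⟨hx, hy, hxy⟩, h⟩
        push_neg at hlt
        refine ENNReal.ofReal_le_ofReal ?_
        calc (1 - x - y) ^ A0 * y ^ A2 * (1 - x) ^ C1 ≤ 1 * 1 * (2/3 : ℝ) ^ C1 :=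
            mul3_le (Real.rpow_nonneg (by linarith) A0) (Real.rpow_nonneg hy.le A2)
              (Real.rpow_nonneg (by linarith) C1)
              (Real.rpow_le_one (by linarith) (by linarith) hA0)
              (Real.rpow_le_one hy.le (by linarith) hA2)
              (Real.rpow_le_rpow_of_nonpos (by norm_num) (by linarith) hC1)
          _ = (2/3 : ℝ) ^ C1 := by ring
      have hcov : Tri ⊆ S1 ∪ (Tri \ S1) := fun q hq => by
        by_cases h : q ∈ S1
        exacts [Or.inl h, Or.inr ⟨hq, h⟩]
      refine ((lintegral_mono' (Measure.restrict_mono hcov le_rfl) le_rfl).trans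
        (lintegral_union_le _ _ _)).trans_lt ?_ |>.ne
      exact ENNReal.add_lt_top.2 ⟨lt_top_iff_ne_top.2 hbS, lt_top_iff_ne_top.2 hbC⟩
    · refine (corner2_lintegral A0 A1 C2 hA0 hA1).1 ?_
      have hbS : (∫⁻ q in S2, h2 q) ≠ ∞ :=
        lint_sandwich_b Gmeas (by positivity) (fun q hq => (sw2 q hq).1)
          inter_subset_left hfin
      have hbC : (∫⁻ q in Tri \ S2, h2 q) ≠ ∞ := by
        refine lint_bounded diff_subset (K := (2/3 : ℝ) ^ C2) ?_
        rintro ⟨x, y⟩ ⟨⟨hx, hy, hxy⟩, hns⟩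
        have hlt : ¬ (1/3 ≤ y) := fun h => hns ⟨⟨hx, hy, hxy⟩, h⟩
        push_neg at hlt
        refine ENNReal.ofReal_le_ofReal ?_
        calc (1 - x - y) ^ A0 * x ^ A1 * (1 - y) ^ C2 ≤ 1 * 1 * (2/3 : ℝ) ^ C2 :=
            mul3_le (Real.rpow_nonneg (by linarith) A0) (Real.rpow_nonneg hx.le A1)
              (Real.rpow_nonneg (by linarith) C2)
              (Real.rpow_le_one (by linarith) (by linarith) hA0)
              (Real.rpow_le_one hx.le (by linarith) hA1)
              (Real.rpow_le_rpow_of_nonpos (by norm_num) (by linarith) hC2)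
          _ = (2/3 : ℝ) ^ C2 := by ring
      have hcov : Tri ⊆ S2 ∪ (Tri \ S2) := fun q hq => by
        by_cases h : q ∈ S2
        exacts [Or.inl h, Or.inr ⟨hq, h⟩]
      refine ((lintegral_mono' (Measure.restrict_mono hcov le_rfl) le_rfl).trans
        (lintegral_union_le _ _ _)).trans_lt ?_ |>.ne
      exact ENNReal.add_lt_top.2 ⟨lt_top_iff_ne_top.2 hbS, lt_top_iff_ne_top.2 hbC⟩
  · rintro ⟨hP0, hP1, hP2⟩
    have hcov : Tri ⊆ S0 ∪ S1 ∪ S2 := by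
      rintro ⟨x, y⟩ hq
      obtain ⟨hx, hy, hxy⟩ := hq
      by_cases h0' : 1/3 ≤ 1 - x - y
      · exact Or.inl (Or.inl ⟨⟨hx, hy, hxy⟩, h0'⟩)
      by_cases h1' : 1/3 ≤ x
      · exact Or.inl (Or.inr ⟨⟨hx, hy, hxy⟩, h1'⟩)
      push_neg at h0' h1'
      exact Or.inr ⟨⟨hx, hy, hxy⟩, by simp only [mem_setOf_eq]; linarith⟩
    have f0 : (∫⁻ q in S0, G q) ≠ ∞ :=
      lint_sandwich_a h0meas (fun q hq => (sw0 q hq).2) inter_subset_left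
        ((corner_lintegral A1 A2 C0 hA1 hA2).2 hP0)
    have f1 : (∫⁻ q in S1, G q) ≠ ∞ :=
      lint_sandwich_a h1meas (fun q hq => (sw1 q hq).2) inter_subset_left
        ((corner1_lintegral A0 A2 C1 hA0 hA2).2 hP1)
    have f2 : (∫⁻ q in S2, G q) ≠ ∞ :=
      lint_sandwich_a h2meas (fun q hq => (sw2 q hq).2) inter_subset_left
        ((corner2_lintegral A0 A1 C2 hA0 hA1).2 hP2)
    refine ((lintegral_mono' (Measure.restrict_mono hcov le_rfl) le_rfl).trans
      ((lintegral_union_le _ _ _).trans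
        (add_le_add_left (lintegral_union_le _ _ _) _))).trans_lt ?_ |>.ne
    exact ENNReal.add_lt_top.2 ⟨ENNReal.add_lt_top.2
      ⟨lt_top_iff_ne_top.2 f0, lt_top_iff_ne_top.2 f1⟩, lt_top_iff_ne_top.2 f2⟩

def TriC : Set (ℝ × ℝ) := {q : ℝ × ℝ | 0 ≤ q.1 ∧ 0 ≤ q.2 ∧ q.1 + q.2 ≤ 1}

lemma boundary_null : volume (TriC \ Tri) = 0 := by
  have hsub : TriC \ Tri ⊆ {q : ℝ × ℝ | q.1 = 0} ∪ {q : ℝ × ℝ | q.2 = 0} ∪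
      {q : ℝ × ℝ | q.1 + q.2 = 1} := by
    rintro ⟨x, y⟩ ⟨⟨hx, hy, hxy⟩, hn⟩
    simp only [Tri, mem_setOf_eq, not_and, not_lt] at hn
    rcases eq_or_lt_of_le hx with h | h
    · exact Or.inl (Or.inl h.symm)
    rcases eq_or_lt_of_le hy with h' | h'
    · exact Or.inl (Or.inr h'.symm)
    · exact Or.inr (le_antisymm hxy (hn h h'))
  refine measure_mono_null hsub ?_
  refine measure_union_null (measure_union_null ?_ ?_) ?_
  · have : {q : ℝ × ℝ | q.1 = 0} = ({0} : Set ℝ) ×ˢ (univ : Set ℝ) := by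
      ext ⟨x, y⟩; simp [Set.mem_prod, eq_comm]
    rw [this, Measure.volume_eq_prod, Measure.prod_prod, Real.volume_singleton, zero_mul]
  · have : {q : ℝ × ℝ | q.2 = 0} = (univ : Set ℝ) ×ˢ ({0} : Set ℝ) := by
      ext ⟨x, y⟩; simp [Set.mem_prod, eq_comm]
    rw [this, Measure.volume_eq_prod, Measure.prod_prod, Real.volume_singleton, mul_zero]
  · have hm : MeasurableSet {q : ℝ × ℝ | q.1 + q.2 = 1} :=
      measurableSet_eq_fun (measurable_fst.add measurable_snd) measurable_const
    rw [Measure.volume_eq_prod, Measure.measure_prod_null hm]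
    refine ae_of_all _ fun x => ?_
    show volume (Prod.mk x ⁻¹' {q : ℝ × ℝ | q.1 + q.2 = 1}) = 0
    have : (Prod.mk x ⁻¹' {q : ℝ × ℝ | q.1 + q.2 = 1}) = {(1 - x : ℝ)} := by
      ext y; simp [mem_preimage, eq_comm]; constructor <;> intro h <;> linarith
    rw [this, Real.volume_singleton]

lemma cond_iff (α₀ α₁ α₂ β₀ β₁ β₂ : ℕ) (p : ℝ) (hp : 0 < p) :
    ((-2 < (α₁:ℝ)*p + (α₂:ℝ)*p + -((β₀:ℝ)*p)) ∧ (-2 < (α₀:ℝ)*p + (α₂:ℝ)*p + -((β₁:ℝ)*p)) ∧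
      (-2 < (α₀:ℝ)*p + (α₁:ℝ)*p + -((β₂:ℝ)*p)))
    ↔ p * ((((α₀ : ℤ) + α₁ + α₂) -
        max ((α₀ : ℤ) + β₀) (max ((α₁ : ℤ) + β₁) ((α₂ : ℤ) + β₂)) : ℤ) : ℝ) > -2 := by
  have e0 : p * (((((α₀ : ℤ) + α₁ + α₂) : ℤ) - ((α₀:ℤ) + β₀) : ℤ) : ℝ)
      = (α₁:ℝ)*p + (α₂:ℝ)*p + -((β₀:ℝ)*p) := by push_cast; ring
  have e1 : p * (((((α₀ : ℤ) + α₁ + α₂) : ℤ) - ((α₁:ℤ) + β₁) : ℤ) : ℝ)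
      = (α₀:ℝ)*p + (α₂:ℝ)*p + -((β₁:ℝ)*p) := by push_cast; ring
  have e2 : p * (((((α₀ : ℤ) + α₁ + α₂) : ℤ) - ((α₂:ℤ) + β₂) : ℤ) : ℝ)
      = (α₀:ℝ)*p + (α₁:ℝ)*p + -((β₂:ℝ)*p) := by push_cast; ring
  set n : ℤ := (α₀ : ℤ) + α₁ + α₂ with hn
  set M : ℤ := max ((α₀ : ℤ) + β₀) (max ((α₁ : ℤ) + β₁) ((α₂ : ℤ) + β₂)) with hM
  constructor
  · rintro ⟨h0, h1, h2⟩
    rcases max_choice ((α₀ : ℤ) + β₀) (max ((α₁ : ℤ) + β₁) ((α₂ : ℤ) + β₂)) with h | h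
    · rw [← hM] at h; rw [h, e0]; exact h0
    rw [← hM] at h
    rcases max_choice ((α₁ : ℤ) + β₁) ((α₂ : ℤ) + β₂) with h' | h'
    · rw [h' ] at h; rw [h, e1]; exact h1
    · rw [h' ] at h; rw [h, e2]; exact h2
  · intro h
    have key : ∀ m : ℤ, m ≤ M → -2 < p * ((n - m : ℤ) : ℝ) := by
      intro m hm
      have : ((n - M : ℤ) : ℝ) ≤ ((n - m : ℤ) : ℝ) := by
        exact_mod_cast sub_le_sub_left hm n
      nlinarith
    refine ⟨?_, ?_, ?_⟩
    · rw [← e0]; exact key _ (le_max_left _ _)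
    · rw [← e1]; exact key _ ((le_max_left _ _).trans (le_max_right _ _))
    · rw [← e2]; exact key _ ((le_max_right _ _).trans (le_max_right _ _))

lemma real_pow_identity (z x y u v w p : ℝ) (hz : 0 < z) (hx : 0 < x) (hy : 0 < y)
    (hu : 0 < u) (hv : 0 < v) (hw : 0 < w) (α₀ α₁ α₂ β₀ β₁ β₂ : ℕ) :
    |z ^ α₀ * x ^ α₁ * y ^ α₂ / (u ^ β₀ * v ^ β₁ * w ^ β₂)| ^ p
      = z ^ ((α₀:ℝ)*p) * x ^ ((α₁:ℝ)*p) * y ^ ((α₂:ℝ)*p) * u ^ (-((β₀:ℝ)*p)) *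
        v ^ (-((β₁:ℝ)*p)) * w ^ (-((β₂:ℝ)*p)) := by
  have hN : (0:ℝ) ≤ z ^ α₀ * x ^ α₁ * y ^ α₂ :=
    mul_nonneg (mul_nonneg (pow_nonneg hz.le _) (pow_nonneg hx.le _)) (pow_nonneg hy.le _)
  have hD : (0:ℝ) ≤ u ^ β₀ * v ^ β₁ * w ^ β₂ :=
    mul_nonneg (mul_nonneg (pow_nonneg hu.le _) (pow_nonneg hv.le _)) (pow_nonneg hw.le _)
  rw [abs_of_nonneg (div_nonneg hN hD), Real.div_rpow hN hD,
    Real.mul_rpow (mul_nonneg (pow_nonneg hz.le _) (pow_nonneg hx.le _)) (pow_nonneg hy.le _),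
    Real.mul_rpow (pow_nonneg hz.le _) (pow_nonneg hx.le _),
    Real.mul_rpow (mul_nonneg (pow_nonneg hu.le _) (pow_nonneg hv.le _)) (pow_nonneg hw.le _),
    Real.mul_rpow (pow_nonneg hu.le _) (pow_nonneg hv.le _),
    ← Real.rpow_natCast z α₀, ← Real.rpow_natCast x α₁, ← Real.rpow_natCast y α₂,
    ← Real.rpow_natCast u β₀, ← Real.rpow_natCast v β₁, ← Real.rpow_natCast w β₂,
    ← Real.rpow_mul hz.le, ← Real.rpow_mul hx.le, ← Real.rpow_mul hy.le,
    ← Real.rpow_mul hu.le, ← Real.rpow_mul hv.le, ← Real.rpow_mul hw.le,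
    div_eq_mul_inv, mul_inv, mul_inv,
    ← Real.rpow_neg hu.le, ← Real.rpow_neg hv.le, ← Real.rpow_neg hw.le]
  ring

lemma partA (α₀ α₁ α₂ β₀ β₁ β₂ : ℕ) (p : ℝ) (hp0 : 0 < p) :
    IntegrableOn
        (fun q : ℝ × ℝ =>
          |(1 - q.1 - q.2) ^ α₀ * q.1 ^ α₁ * q.2 ^ α₂ /
              ((q.1 + q.2) ^ β₀ * (1 - q.1) ^ β₁ * (1 - q.2) ^ β₂)| ^ p)
        {q : ℝ × ℝ | 0 < q.1 ∧ 0 < q.2 ∧ q.1 + q.2 < 1} ↔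
      p * ((((α₀ : ℤ) + α₁ + α₂) -
          max ((α₀ : ℤ) + β₀) (max ((α₁ : ℤ) + β₁) ((α₂ : ℤ) + β₂)) : ℤ) : ℝ) > -2 := by
  have m0 : Measurable fun q : ℝ × ℝ => 1 - q.1 - q.2 :=
    (measurable_const.sub measurable_fst).sub measurable_snd
  have msum : Measurable fun q : ℝ × ℝ => q.1 + q.2 := measurable_fst.add measurable_snd
  have mcx : Measurable fun q : ℝ × ℝ => 1 - q.1 := measurable_const.sub measurable_fst
  have mcy : Measurable fun q : ℝ × ℝ => 1 - q.2 := measurable_const.sub measurable_snd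
  have mF : Measurable fun q : ℝ × ℝ =>
      |(1 - q.1 - q.2) ^ α₀ * q.1 ^ α₁ * q.2 ^ α₂ /
        ((q.1 + q.2) ^ β₀ * (1 - q.1) ^ β₁ * (1 - q.2) ^ β₂)| ^ p := by
    apply Measurable.pow_const
    apply Measurable.abs
    exact (((m0.pow_const α₀).mul (measurable_fst.pow_const α₁)).mul
      (measurable_snd.pow_const α₂)).div
      (((msum.pow_const β₀).mul (mcx.pow_const β₁)).mul (mcy.pow_const β₂))
  have hTri : {q : ℝ × ℝ | 0 < q.1 ∧ 0 < q.2 ∧ q.1 + q.2 < 1} = Tri := rfl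
  rw [hTri]
  have h1 := lintegral_ofReal_ne_top_iff_integrable (μ := volume.restrict Tri)
    mF.aestronglyMeasurable
    (ae_of_all _ fun q => Real.rpow_nonneg (abs_nonneg _) p)
  have h2 : (∫⁻ q in Tri, ENNReal.ofReal
      (|(1 - q.1 - q.2) ^ α₀ * q.1 ^ α₁ * q.2 ^ α₂ /
        ((q.1 + q.2) ^ β₀ * (1 - q.1) ^ β₁ * (1 - q.2) ^ β₂)| ^ p))
      = ∫⁻ q in Tri, ENNReal.ofReal ((1 - q.1 - q.2) ^ ((α₀:ℝ)*p) * q.1 ^ ((α₁:ℝ)*p) *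
        q.2 ^ ((α₂:ℝ)*p) * (q.1 + q.2) ^ (-((β₀:ℝ)*p)) * (1 - q.1) ^ (-((β₁:ℝ)*p)) *
        (1 - q.2) ^ (-((β₂:ℝ)*p))) := by
    refine setLIntegral_congr_fun Tri_measurable ?_
    rintro ⟨x, y⟩ ⟨hx, hy, hxy⟩
    dsimp only
    congr 1
    exact real_pow_identity _ _ _ _ _ _ p (by linarith) hx hy (by linarith) (by linarith)
      (by linarith) α₀ α₁ α₂ β₀ β₁ β₂
  have hnn : ∀ k : ℕ, (0:ℝ) ≤ (k:ℝ) * p := fun k => mul_nonneg (Nat.cast_nonneg k) hp0.le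
  rw [IntegrableOn, ← h1, h2, main_lintegral _ _ _ _ _ _ (hnn α₀) (hnn α₁) (hnn α₂)
    (neg_nonpos.2 (hnn β₀)) (neg_nonpos.2 (hnn β₁)) (neg_nonpos.2 (hnn β₂)),
    cond_iff α₀ α₁ α₂ β₀ β₁ β₂ p hp0]


/-- `L^p`-integrability of `R^α_β` over the (interior of the) standard triangle:
`∫ |R^α_β|^p < ∞` iff `p (|α| − ‖α+β‖_∞) > −2`; in particular `R^α_β` is Lebesgue
integrable on `T` iff `‖α+β‖_∞ ≤ |α| + 1`. -/
theorem rational_Lp_integrability (α₀ α₁ α₂ β₀ β₁ β₂ : ℕ) (p : ℝ) (hp : 1 ≤ p) :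
    (IntegrableOn
        (fun q : ℝ × ℝ =>
          |(1 - q.1 - q.2) ^ α₀ * q.1 ^ α₁ * q.2 ^ α₂ /
              ((q.1 + q.2) ^ β₀ * (1 - q.1) ^ β₁ * (1 - q.2) ^ β₂)| ^ p)
        {q : ℝ × ℝ | 0 < q.1 ∧ 0 < q.2 ∧ q.1 + q.2 < 1} ↔
      p * ((((α₀ : ℤ) + α₁ + α₂) -
          max ((α₀ : ℤ) + β₀) (max ((α₁ : ℤ) + β₁) ((α₂ : ℤ) + β₂)) : ℤ) : ℝ) > -2) ∧
    (IntegrableOn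
        (fun q : ℝ × ℝ =>
          (1 - q.1 - q.2) ^ α₀ * q.1 ^ α₁ * q.2 ^ α₂ /
            ((q.1 + q.2) ^ β₀ * (1 - q.1) ^ β₁ * (1 - q.2) ^ β₂))
        {q : ℝ × ℝ | 0 ≤ q.1 ∧ 0 ≤ q.2 ∧ q.1 + q.2 ≤ 1} ↔
      max (α₀ + β₀) (max (α₁ + β₁) (α₂ + β₂)) ≤ α₀ + α₁ + α₂ + 1) := by
  have hp0 : (0:ℝ) < p := lt_of_lt_of_le zero_lt_one hp
  refine ⟨partA α₀ α₁ α₂ β₀ β₁ β₂ p hp0, ?_⟩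
  -- part 2
  have m0 : Measurable fun q : ℝ × ℝ => 1 - q.1 - q.2 :=
    (measurable_const.sub measurable_fst).sub measurable_snd
  have msum : Measurable fun q : ℝ × ℝ => q.1 + q.2 := measurable_fst.add measurable_snd
  have mcx : Measurable fun q : ℝ × ℝ => 1 - q.1 := measurable_const.sub measurable_fst
  have mcy : Measurable fun q : ℝ × ℝ => 1 - q.2 := measurable_const.sub measurable_snd
  have mf : Measurable fun q : ℝ × ℝ =>
      (1 - q.1 - q.2) ^ α₀ * q.1 ^ α₁ * q.2 ^ α₂ /
        ((q.1 + q.2) ^ β₀ * (1 - q.1) ^ β₁ * (1 - q.2) ^ β₂) :=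
    (((m0.pow_const α₀).mul (measurable_fst.pow_const α₁)).mul
      (measurable_snd.pow_const α₂)).div
      (((msum.pow_const β₀).mul (mcx.pow_const β₁)).mul (mcy.pow_const β₂))
  have hTriC : {q : ℝ × ℝ | 0 ≤ q.1 ∧ 0 ≤ q.2 ∧ q.1 + q.2 ≤ 1} = TriC := rfl
  rw [hTriC]
  have hae : TriC =ᵐ[volume] Tri := by
    rw [MeasureTheory.ae_eq_set]
    constructor
    · exact boundary_null
    · have hsub : Tri ⊆ TriC := by
        rintro ⟨x, y⟩ ⟨h1, h2, h3⟩
        exact ⟨h1.le, h2.le, h3.le⟩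
      rw [diff_eq_empty.2 hsub]
      exact measure_empty
  have step1 : IntegrableOn
      (fun q : ℝ × ℝ => (1 - q.1 - q.2) ^ α₀ * q.1 ^ α₁ * q.2 ^ α₂ /
        ((q.1 + q.2) ^ β₀ * (1 - q.1) ^ β₁ * (1 - q.2) ^ β₂)) TriC ↔
      IntegrableOn
      (fun q : ℝ × ℝ => (1 - q.1 - q.2) ^ α₀ * q.1 ^ α₁ * q.2 ^ α₂ /
        ((q.1 + q.2) ^ β₀ * (1 - q.1) ^ β₁ * (1 - q.2) ^ β₂)) Tri := by
    rw [IntegrableOn, IntegrableOn, Measure.restrict_congr_set hae]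
  have step2 : IntegrableOn
      (fun q : ℝ × ℝ => (1 - q.1 - q.2) ^ α₀ * q.1 ^ α₁ * q.2 ^ α₂ /
        ((q.1 + q.2) ^ β₀ * (1 - q.1) ^ β₁ * (1 - q.2) ^ β₂)) Tri ↔
      IntegrableOn
      (fun q : ℝ × ℝ => |(1 - q.1 - q.2) ^ α₀ * q.1 ^ α₁ * q.2 ^ α₂ /
        ((q.1 + q.2) ^ β₀ * (1 - q.1) ^ β₁ * (1 - q.2) ^ β₂)| ^ (1:ℝ))
      {q : ℝ × ℝ | 0 < q.1 ∧ 0 < q.2 ∧ q.1 + q.2 < 1} := by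
    have hfun : (fun q : ℝ × ℝ => |(1 - q.1 - q.2) ^ α₀ * q.1 ^ α₁ * q.2 ^ α₂ /
        ((q.1 + q.2) ^ β₀ * (1 - q.1) ^ β₁ * (1 - q.2) ^ β₂)| ^ (1:ℝ))
        = fun q : ℝ × ℝ => ‖(1 - q.1 - q.2) ^ α₀ * q.1 ^ α₁ * q.2 ^ α₂ /
        ((q.1 + q.2) ^ β₀ * (1 - q.1) ^ β₁ * (1 - q.2) ^ β₂)‖ := by
      funext q
      rw [Real.rpow_one, Real.norm_eq_abs]
    rw [hfun]
    exact (integrable_norm_iff mf.aestronglyMeasurable.restrict).symm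
  rw [step1, step2, partA α₀ α₁ α₂ β₀ β₁ β₂ 1 zero_lt_one]
  rw [one_mul]
  have hcast : ((max (α₀ + β₀) (max (α₁ + β₁) (α₂ + β₂)) : ℕ) : ℤ)
      = max ((α₀ : ℤ) + β₀) (max ((α₁ : ℤ) + β₁) ((α₂ : ℤ) + β₂)) := by
    push_cast
    rfl
  constructor
  · intro h
    have h' : (-2 : ℤ) < ((α₀ : ℤ) + α₁ + α₂) -
        max ((α₀ : ℤ) + β₀) (max ((α₁ : ℤ) + β₁) ((α₂ : ℤ) + β₂)) := by exact_mod_cast h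
    rw [← Nat.cast_le (α := ℤ), hcast]
    push_cast
    omega
  · intro h
    rw [← Nat.cast_le (α := ℤ), hcast] at h
    push_cast at h
    have h' : (-2 : ℤ) < ((α₀ : ℤ) + α₁ + α₂) -
        max ((α₀ : ℤ) + β₀) (max ((α₁ : ℤ) + β₁) ((α₂ : ℤ) + β₂)) := by omega
    exact_mod_cast h'
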